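/- Let κ > 0, ε ≥ 0, r̄ ∈ ℝⁿ, and set Σ̃ = Σ + (√ε/κ)I. Then the vector x = (1/(2κ))( Σ̃⁻¹ − Σ̃⁻¹e eᵀΣ̃⁻¹/(eᵀΣ̃⁻¹e) ) r̄ + Σ̃⁻¹e/(eᵀΣ̃⁻¹e) is the unique minimizer of the function x ↦ κ xᵀΣx − r̄ᵀx + √ε·‖x‖₂² over C. -/

import Mathlib

open Matrix

private lemma vecMulVec_mulVec_aux {n : ℕ} (u v r : Fin n → ℝ) :
    (vecMulVec u v) *ᵥ r = (v ⬝ᵥ r) • u := by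
  ext i
  simp [Matrix.mulVec, vecMulVec_apply, dotProduct, Finset.mul_sum, mul_assoc,
    mul_comm, mul_left_comm]

/-- for `κ > 0`, `ε ≥ 0`, `Σ̃ = Σ + (√ε/κ)I`, the vector
`(1/(2κ))(Σ̃⁻¹ − Σ̃⁻¹e eᵀΣ̃⁻¹/(eᵀΣ̃⁻¹e)) r̄ + Σ̃⁻¹e/(eᵀΣ̃⁻¹e)` is the unique
minimizer of `x ↦ κ xᵀΣx − r̄ᵀx + √ε ‖x‖₂²` over `C = {x : eᵀx = 1}`. -/
theorem stmt7 (n : ℕ) (hn : 1 ≤ n) (A : Matrix (Fin n) (Fin n) ℝ)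
    (hA : A.PosDef) (hAs : A.IsSymm)
    (e : Fin n → ℝ) (he : e = fun _ => 1)
    (κ ε : ℝ) (hκ : 0 < κ) (hε : 0 ≤ ε)
    (Atil : Matrix (Fin n) (Fin n) ℝ)
    (hAtil : Atil = A + (Real.sqrt ε / κ) • (1 : Matrix (Fin n) (Fin n) ℝ))
    (rbar : Fin n → ℝ) (xstar : Fin n → ℝ)
    (hxstar : xstar = (1 / (2 * κ)) •
        ((Atil⁻¹ - (e ⬝ᵥ Atil⁻¹ *ᵥ e)⁻¹ •
          vecMulVec (Atil⁻¹ *ᵥ e) (e ᵥ* Atil⁻¹)) *ᵥ rbar)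
      + (e ⬝ᵥ Atil⁻¹ *ᵥ e)⁻¹ • (Atil⁻¹ *ᵥ e)) :
    e ⬝ᵥ xstar = 1 ∧
    ∀ y : Fin n → ℝ, e ⬝ᵥ y = 1 → y ≠ xstar →
      κ * (xstar ⬝ᵥ A *ᵥ xstar) - rbar ⬝ᵥ xstar + Real.sqrt ε * (xstar ⬝ᵥ xstar) <
        κ * (y ⬝ᵥ A *ᵥ y) - rbar ⬝ᵥ y + Real.sqrt ε * (y ⬝ᵥ y) := by
  have hc0 : 0 ≤ Real.sqrt ε / κ := div_nonneg (Real.sqrt_nonneg ε) hκ.le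
  -- Atil is positive definite
  have hPSD : ((Real.sqrt ε / κ) • (1 : Matrix (Fin n) (Fin n) ℝ)).PosSemidef := by
    refine Matrix.PosSemidef.of_dotProduct_mulVec_nonneg ?_ ?_
    · unfold Matrix.IsHermitian
      rw [conjTranspose_smul]
      simp
    · intro x
      rw [smul_mulVec, one_mulVec, dotProduct_smul, star_trivial]
      have : 0 ≤ x ⬝ᵥ x := by
        simp only [dotProduct, ← sq]
        exact Finset.sum_nonneg fun i _ => sq_nonneg _
      positivity
  have hPD : Atil.PosDef := by rw [hAtil]; exact hA.add_posSemidef hPSD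
  have hdet : IsUnit Atil.det := isUnit_iff_ne_zero.mpr hPD.det_pos.ne'
  have hAM : Atil * Atil⁻¹ = 1 := Matrix.mul_nonsing_inv _ hdet
  have hMPD : (Atil⁻¹).PosDef := hPD.inv
  set M := Atil⁻¹ with hM
  set s := e ⬝ᵥ M *ᵥ e with hs
  have he0 : e ≠ 0 := by
    rw [he]
    intro h
    have := congrFun h ⟨0, hn⟩
    simpa using this
  have hs0 : 0 < s := by
    have := hMPD.dotProduct_mulVec_pos he0
    rwa [star_trivial] at this
  set r1 := e ⬝ᵥ M *ᵥ rbar with hr1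
  -- key: vecMulVec term applied to rbar
  have hvmv : (vecMulVec (M *ᵥ e) (e ᵥ* M)) *ᵥ rbar = r1 • (M *ᵥ e) := by
    rw [vecMulVec_mulVec_aux, hr1, dotProduct_mulVec]
  -- e ⬝ᵥ xstar = 1
  have hex : e ⬝ᵥ xstar = 1 := by
    rw [hxstar, dotProduct_add, dotProduct_smul, dotProduct_smul,
      Matrix.sub_mulVec, smul_mulVec, hvmv, dotProduct_sub, dotProduct_smul,
      dotProduct_smul, ← hs]
    rw [show e ⬝ᵥ M *ᵥ rbar = r1 from rfl]
    simp only [smul_eq_mul]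
    field_simp
    ring
  refine ⟨hex, ?_⟩
  -- Atil *ᵥ xstar
  have hAMv : ∀ v : Fin n → ℝ, Atil *ᵥ (M *ᵥ v) = v := by
    intro v
    rw [Matrix.mulVec_mulVec, hAM, Matrix.one_mulVec]
  have hAx : Atil *ᵥ xstar = (1 / (2 * κ)) • (rbar - (s⁻¹ * r1) • e) + s⁻¹ • e := by
    rw [hxstar, Matrix.mulVec_add, Matrix.mulVec_smul, Matrix.mulVec_smul,
      Matrix.sub_mulVec, smul_mulVec, hvmv, Matrix.mulVec_sub,
      Matrix.mulVec_smul, Matrix.mulVec_smul, hAMv, hAMv, smul_smul]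
  -- objective rewrite
  have hobj : ∀ y : Fin n → ℝ,
      κ * (y ⬝ᵥ A *ᵥ y) - rbar ⬝ᵥ y + Real.sqrt ε * (y ⬝ᵥ y)
        = κ * (y ⬝ᵥ Atil *ᵥ y) - rbar ⬝ᵥ y := by
    intro y
    rw [hAtil, Matrix.add_mulVec, smul_mulVec, one_mulVec, dotProduct_add,
      dotProduct_smul, smul_eq_mul]
    field_simp
    ring
  intro y hey hyx
  rw [hobj, hobj]
  set d := y - xstar with hd
  have hd0 : d ≠ 0 := sub_ne_zero.mpr hyx
  have hed : e ⬝ᵥ d = 0 := by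
    rw [hd, dotProduct_sub, hey, hex, sub_self]
  have hde : d ⬝ᵥ e = 0 := by rw [dotProduct_comm]; exact hed
  have hdpos : 0 < d ⬝ᵥ Atil *ᵥ d := by
    have := hPD.dotProduct_mulVec_pos hd0
    rwa [star_trivial] at this
  -- d ⬝ᵥ Atil *ᵥ xstar = (1/(2κ)) * (d ⬝ᵥ rbar)
  have hdAx : d ⬝ᵥ Atil *ᵥ xstar = (1 / (2 * κ)) * (d ⬝ᵥ rbar) := by
    rw [hAx, dotProduct_add, dotProduct_smul, dotProduct_sub, dotProduct_smul,
      dotProduct_smul, hde]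
    simp only [smul_eq_mul, mul_zero, smul_zero]
    ring
  -- symmetry of Atil
  have hsymm : ∀ u v : Fin n → ℝ, u ⬝ᵥ Atil *ᵥ v = v ⬝ᵥ Atil *ᵥ u := by
    have hAt : Atilᵀ = Atil := by
      have h := hPD.isHermitian.eq
      rwa [conjTranspose_eq_transpose_of_trivial] at h
    intro u v
    rw [dotProduct_mulVec, ← Matrix.mulVec_transpose, hAt, dotProduct_comm]
  have hy : y = xstar + d := by rw [hd]; ring
  have hexp : y ⬝ᵥ Atil *ᵥ y
      = xstar ⬝ᵥ Atil *ᵥ xstar + 2 * (d ⬝ᵥ Atil *ᵥ xstar) + d ⬝ᵥ Atil *ᵥ d := by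
    rw [hy, Matrix.mulVec_add, dotProduct_add, add_dotProduct, add_dotProduct,
      hsymm xstar d]
    ring
  have hry : rbar ⬝ᵥ y = rbar ⬝ᵥ xstar + d ⬝ᵥ rbar := by
    rw [hy, dotProduct_add, dotProduct_comm rbar d]
  rw [hexp, hry, hdAx]
  have h2κ : (2 * κ) ≠ 0 := by positivity
  have : κ * (2 * (1 / (2 * κ) * (d ⬝ᵥ rbar))) = d ⬝ᵥ rbar := by
    field_simp
  nlinarith [mul_pos hκ hdpos]
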